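/- Let X₁, ..., Xₙ be integrable random variables with X = Σᵢ Xᵢ, and let β₁, ..., βₙ ∈ (0,1) with β = Σᵢ βᵢ ∈ (0,1). Then Σᵢ R_{[0,βᵢ] ∪ [1-β+βᵢ, 1]}(Xᵢ) ≥ R_{[0,β]}(X). In particular, the inf-convolution of the functionals R_{I_i} over all allocations of X is bounded below by R_{[0,β]}(X). -/

import Mathlib

open MeasureTheory Set Filter ENNReal

/-- Left `u`-quantile of a random variable `X` under measure `μ`. -/
noncomputable def leftQuantile {Ω : Type*} [MeasurableSpace Ω] (μ : Measure Ω)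
    (X : Ω → ℝ) (u : ℝ) : ℝ :=
  sInf {x : ℝ | u ≤ (μ {ω | X ω ≤ x}).toReal}

/-- Averaged quantile functional `R_I`. -/
noncomputable def avgQuantile {Ω : Type*} [MeasurableSpace Ω] (μ : Measure Ω)
    (X : Ω → ℝ) (I : Set ℝ) : ℝ :=
  (volume I).toReal⁻¹ * ∫ u in I, leftQuantile μ X u

/-- Extension of the left quantile used for measurability/pushforward arguments. -/
noncomputable def qext {Ω : Type*} [MeasurableSpace Ω] (μ : Measure Ω) (Y : Ω → ℝ) : ℝ → ℝ :=
  fun u => if 0 < u ∧ u < 1 then leftQuantile μ Y u else 0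

set_option linter.unusedSectionVars false
set_option maxHeartbeats 1000000

section Aux

variable {Ω : Type*} [MeasurableSpace Ω] {μ : Measure Ω} {Y : Ω → ℝ}

lemma cdf_mono [IsFiniteMeasure μ] {x y : ℝ} (hxy : x ≤ y) :
    (μ {ω | Y ω ≤ x}).toReal ≤ (μ {ω | Y ω ≤ y}).toReal :=
  ENNReal.toReal_mono (measure_ne_top μ _)
    (measure_mono (fun ω h => le_trans h hxy))

lemma exists_cdf_lt [IsFiniteMeasure μ] (hY : Measurable Y) {u : ℝ} (hu : 0 < u) :
    ∃ x : ℝ, (μ {ω | Y ω ≤ x}).toReal < u := by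
  have hanti : Antitone (fun n : ℕ => {ω | Y ω ≤ -(n : ℝ)}) := by
    intro m n hmn ω hω
    simp only [mem_setOf_eq] at hω ⊢
    have : -(n : ℝ) ≤ -(m : ℝ) := by exact_mod_cast neg_le_neg (by exact_mod_cast hmn)
    linarith
  have hTends := tendsto_measure_iInter_atTop (μ := μ) (s := fun n : ℕ => {ω | Y ω ≤ -(n:ℝ)})
    (fun n => (show MeasurableSet {ω | Y ω ≤ -(n:ℝ)} from hY measurableSet_Iic).nullMeasurableSet)
    hanti ⟨0, measure_ne_top μ _⟩
  have hempty : ⋂ n : ℕ, {ω | Y ω ≤ -(n : ℝ)} = (∅ : Set Ω) := by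
    ext ω
    simp only [mem_iInter, mem_setOf_eq, mem_empty_iff_false, iff_false, not_forall]
    obtain ⟨n, hn⟩ := exists_nat_gt (-(Y ω))
    exact ⟨n, by linarith⟩
  rw [hempty] at hTends
  simp only [measure_empty] at hTends
  have := (hTends.eventually_lt_const (show (0:ℝ≥0∞) < ENNReal.ofReal u from ENNReal.ofReal_pos.2 hu)).exists
  obtain ⟨n, hn⟩ := this
  exact ⟨-(n : ℝ), ENNReal.toReal_lt_of_lt_ofReal hn⟩

lemma exists_le_cdf [IsProbabilityMeasure μ] {u : ℝ} (hu : u < 1) :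
    ∃ x : ℝ, u ≤ (μ {ω | Y ω ≤ x}).toReal := by
  have hmono : Monotone (fun n : ℕ => {ω | Y ω ≤ (n : ℝ)}) := by
    intro m n hmn ω hω
    simp only [mem_setOf_eq] at hω ⊢
    have : (m : ℝ) ≤ n := by exact_mod_cast hmn
    linarith
  have hTends := tendsto_measure_iUnion_atTop (μ := μ) hmono
  have huniv : ⋃ n : ℕ, {ω | Y ω ≤ (n : ℝ)} = (univ : Set Ω) := by
    ext ω
    simp only [mem_iUnion, mem_setOf_eq, mem_univ, iff_true]
    obtain ⟨n, hn⟩ := exists_nat_gt (Y ω)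
    exact ⟨n, hn.le⟩
  rw [huniv, measure_univ] at hTends
  have := (hTends.eventually_const_lt (show ENNReal.ofReal u < 1 from ENNReal.ofReal_lt_one.2 hu)).exists
  obtain ⟨n, hn⟩ := this
  exact ⟨(n : ℝ), (ENNReal.ofReal_le_iff_le_toReal (measure_ne_top μ _)).1 hn.le⟩


variable [IsProbabilityMeasure μ]

lemma qset_nonempty (hu : u < 1) :
    {x : ℝ | u ≤ (μ {ω | Y ω ≤ x}).toReal}.Nonempty := exists_le_cdf hu

lemma qset_bddBelow (hY : Measurable Y) {u : ℝ} (hu : 0 < u) :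
    BddBelow {x : ℝ | u ≤ (μ {ω | Y ω ≤ x}).toReal} := by
  obtain ⟨x₀, hx₀⟩ := exists_cdf_lt (μ := μ) hY hu
  refine ⟨x₀, fun s hs => ?_⟩
  by_contra h
  push_neg at h
  exact absurd (le_trans hs (cdf_mono h.le)) (not_le.2 hx₀)

lemma le_cdf_leftQuantile (hY : Measurable Y) {u : ℝ} (hu : 0 < u) (hu1 : u < 1) :
    u ≤ (μ {ω | Y ω ≤ leftQuantile μ Y u}).toReal := by
  set q := leftQuantile μ Y u with hq
  have hS : ∀ n : ℕ, u ≤ (μ {ω | Y ω ≤ q + 1/(n+1)}).toReal := by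
    intro n
    have hlt : sInf {x : ℝ | u ≤ (μ {ω | Y ω ≤ x}).toReal} < q + 1/(n+1) := by
      have h0 : sInf {x : ℝ | u ≤ (μ {ω | Y ω ≤ x}).toReal} = q := rfl
      have : (0:ℝ) < 1/(n+1) := by positivity
      rw [h0]
      linarith
    obtain ⟨s, hsmem, hs⟩ := (csInf_lt_iff (qset_bddBelow hY hu) (qset_nonempty hu1)).1 hlt
    exact le_trans hsmem (cdf_mono hs.le)
  have hiI : {ω | Y ω ≤ q} = ⋂ n : ℕ, {ω | Y ω ≤ q + 1/(n+1)} := by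
    ext ω
    simp only [mem_setOf_eq, mem_iInter]
    constructor
    · intro h n
      have : (0:ℝ) < 1/(n+1) := by positivity
      linarith
    · intro h
      by_contra hc
      push_neg at hc
      obtain ⟨n, hn⟩ := exists_nat_one_div_lt (show (0:ℝ) < Y ω - q by linarith)
      have := h n
      linarith
  have hanti : Antitone (fun n : ℕ => {ω | Y ω ≤ q + 1/(n+1)}) := by
    intro m n hmn ω hω
    simp only [mem_setOf_eq] at hω ⊢
    have h1 : (1:ℝ)/(n+1) ≤ 1/(m+1) := by
      apply one_div_le_one_div_of_le (by positivity)
      have : (m:ℝ) ≤ n := by exact_mod_cast hmn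
      linarith
    linarith
  have hmeas := Antitone.measure_iInter (μ := μ) hanti
    (fun n => (show MeasurableSet {ω | Y ω ≤ q + 1/(n+1)} from hY measurableSet_Iic).nullMeasurableSet)
    ⟨0, measure_ne_top μ _⟩
  rw [← hiI] at hmeas
  have hge : ENNReal.ofReal u ≤ μ {ω | Y ω ≤ q} := by
    rw [hmeas]
    exact le_iInf fun n => (ENNReal.ofReal_le_iff_le_toReal (measure_ne_top μ _)).2 (hS n)
  exact (ENNReal.ofReal_le_iff_le_toReal (measure_ne_top μ _)).1 hge

lemma leftQuantile_le_iff (hY : Measurable Y) {u x : ℝ} (hu : 0 < u) (hu1 : u < 1) :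
    leftQuantile μ Y u ≤ x ↔ u ≤ (μ {ω | Y ω ≤ x}).toReal := by
  constructor
  · intro h
    exact le_trans (le_cdf_leftQuantile hY hu hu1) (cdf_mono h)
  · intro h
    exact csInf_le (qset_bddBelow hY hu) h

lemma leftQuantile_mono (hY : Measurable Y) {u v : ℝ} (hu : 0 < u) (huv : u ≤ v) (hv : v < 1) :
    leftQuantile μ Y u ≤ leftQuantile μ Y v :=
  csInf_le_csInf (qset_bddBelow hY hu) (qset_nonempty hv)
    (fun x hx => le_trans huv hx)

lemma cdf_nonneg (x : ℝ) : (0:ℝ) ≤ (μ {ω | Y ω ≤ x}).toReal := ENNReal.toReal_nonneg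

lemma cdf_le_one (x : ℝ) : (μ {ω | Y ω ≤ x}).toReal ≤ 1 := by
  have := measure_mono (μ := μ) (subset_univ {ω | Y ω ≤ x})
  rw [measure_univ] at this
  simpa using ENNReal.toReal_mono (by simp) this

lemma measurable_qext (hY : Measurable Y) : Measurable (qext μ Y) := by
  apply measurable_of_Iic
  intro x
  have : qext μ Y ⁻¹' Iic x =
      (Ioo (0:ℝ) 1 ∩ Iic ((μ {ω | Y ω ≤ x}).toReal)) ∪
      (if (0:ℝ) ≤ x then (Ioo (0:ℝ) 1)ᶜ else ∅) := by
    ext u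
    by_cases hu : 0 < u ∧ u < 1
    · simp only [mem_preimage, mem_Iic, qext, if_pos hu, mem_union, mem_inter_iff, mem_Ioo]
      rw [leftQuantile_le_iff hY hu.1 hu.2]
      constructor
      · intro h; exact Or.inl ⟨hu, h⟩
      · intro h
        rcases h with ⟨_, h⟩ | h
        · exact h
        · split_ifs at h with hx
          · exact absurd hu (by simpa [mem_compl_iff, mem_Ioo] using h)
          · exact absurd h (notMem_empty u)
    · simp only [mem_preimage, mem_Iic, qext, if_neg hu, mem_union, mem_inter_iff, mem_Ioo]
      constructor
      · intro h
        right
        rw [if_pos h]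
        simpa [mem_compl_iff, mem_Ioo] using hu
      · intro h
        rcases h with ⟨h1, _⟩ | h
        · exact absurd h1 hu
        · split_ifs at h with hx
          · exact hx
          · exact absurd h (notMem_empty u)
  rw [this]
  apply MeasurableSet.union (measurableSet_Ioo.inter measurableSet_Iic)
  split_ifs
  · exact measurableSet_Ioo.compl
  · exact MeasurableSet.empty

lemma map_qext (hY : Measurable Y) :
    Measure.map (qext μ Y) (volume.restrict (Ioo (0:ℝ) 1)) = Measure.map Y μ := by
  have h1 : IsFiniteMeasure (Measure.map (qext μ Y) (volume.restrict (Ioo (0:ℝ) 1))) := by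
    constructor
    rw [Measure.map_apply (measurable_qext hY) MeasurableSet.univ]
    exact lt_of_le_of_lt (measure_mono (subset_univ _)) (by simp)
  haveI := h1
  refine Measure.ext_of_Iic _ _ ?_
  intro x
  rw [Measure.map_apply (measurable_qext hY) measurableSet_Iic,
      Measure.map_apply hY measurableSet_Iic,
      Measure.restrict_apply ((measurable_qext hY) measurableSet_Iic)]
  have hYx : (Y ⁻¹' Iic x) = {ω | Y ω ≤ x} := rfl
  set c := (μ {ω | Y ω ≤ x}).toReal with hc
  have hpre : qext μ Y ⁻¹' Iic x ∩ Ioo 0 1 = Iic c ∩ Ioo (0:ℝ) 1 := by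
    ext u
    simp only [mem_inter_iff, mem_preimage, mem_Iic, mem_Ioo]
    constructor
    · rintro ⟨h, hu⟩
      refine ⟨?_, hu⟩
      rw [qext, if_pos ⟨hu.1, hu.2⟩] at h
      exact (leftQuantile_le_iff hY hu.1 hu.2).1 h
    · rintro ⟨h, hu⟩
      refine ⟨?_, hu⟩
      rw [qext, if_pos ⟨hu.1, hu.2⟩]
      exact (leftQuantile_le_iff hY hu.1 hu.2).2 h
  rw [hpre, hYx]
  have hc0 : 0 ≤ c := ENNReal.toReal_nonneg
  have hc1 : c ≤ 1 := cdf_le_one x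
  rcases eq_or_lt_of_le hc1 with hceq | hclt
  · have : Iic c ∩ Ioo (0:ℝ) 1 = Ioo (0:ℝ) 1 := by
      ext u; simp only [mem_inter_iff, mem_Iic, mem_Ioo]
      exact ⟨fun h => h.2, fun h => ⟨by linarith [h.2], h⟩⟩
    rw [this, Real.volume_Ioo]
    have : ENNReal.ofReal (1 - 0) = ENNReal.ofReal c := by rw [← hceq]; norm_num
    rw [this, hc, ENNReal.ofReal_toReal (measure_ne_top μ _)]
  · have : Iic c ∩ Ioo (0:ℝ) 1 = Ioc (0:ℝ) c := by
      ext u; simp only [mem_inter_iff, mem_Iic, mem_Ioo, mem_Ioc]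
      exact ⟨fun h => ⟨h.2.1, h.1⟩, fun h => ⟨h.2, h.1, lt_of_le_of_lt h.2 hclt⟩⟩
    rw [this, Real.volume_Ioc]
    simp [hc, ENNReal.ofReal_toReal (measure_ne_top μ _)]

lemma qext_eq_on : EqOn (qext μ Y) (leftQuantile μ Y) (Ioo (0:ℝ) 1) := by
  intro u hu
  simp only [qext, if_pos (show 0 < u ∧ u < 1 from ⟨hu.1, hu.2⟩)]

/-- transfer of integrals through the quantile pushforward -/
lemma integral_qcomp (hY : Measurable Y) {f : ℝ → ℝ} (hf : Measurable f) :
    ∫ u in Ioo (0:ℝ) 1, f (leftQuantile μ Y u) = ∫ ω, f (Y ω) ∂μ := by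
  have h1 : ∫ u in Ioo (0:ℝ) 1, f (leftQuantile μ Y u)
      = ∫ u in Ioo (0:ℝ) 1, f (qext μ Y u) :=
    (setIntegral_congr_fun measurableSet_Ioo (fun u hu => by rw [qext_eq_on hu])).symm
  rw [h1,
    ← integral_map (μ := volume.restrict (Ioo (0:ℝ) 1)) (measurable_qext (μ := μ) hY).aemeasurable
      (hf.aestronglyMeasurable),
    map_qext hY,
    integral_map hY.aemeasurable hf.aestronglyMeasurable]

lemma integrable_qcomp (hY : Measurable Y) {f : ℝ → ℝ} (hf : Measurable f)
    (hfi : Integrable (fun ω => f (Y ω)) μ) :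
    IntegrableOn (fun u => f (leftQuantile μ Y u)) (Ioo (0:ℝ) 1) volume := by
  have h2 : Integrable f (Measure.map Y μ) := by
    rw [integrable_map_measure hf.aestronglyMeasurable hY.aemeasurable]
    exact hfi
  rw [← map_qext (μ := μ) hY,
    integrable_map_measure hf.aestronglyMeasurable (measurable_qext (μ := μ) hY).aemeasurable] at h2
  exact (h2.congr ((ae_restrict_iff' measurableSet_Ioo).2
    (Filter.Eventually.of_forall (fun u hu => by simp [Function.comp, qext_eq_on hu]))))

lemma integrableOn_quantile (hY : Measurable Y) (hYi : Integrable Y μ) :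
    IntegrableOn (leftQuantile μ Y) (Ioo (0:ℝ) 1) volume := by
  have := integrable_qcomp (μ := μ) (Y := Y) (f := fun x => x) hY measurable_id hYi
  simpa using this

lemma integrable_min_const (hYi : Integrable Y μ) (a : ℝ) :
    Integrable (fun ω => min (Y ω) a) μ := by
  have h := hYi.inf (integrable_const a)
  exact h

lemma integrable_max_const (hYi : Integrable Y μ) (a : ℝ) :
    Integrable (fun ω => max (Y ω) a) μ := by
  have h := hYi.sup (integrable_const a)
  exact h

lemma bottom_formula (hY : Measurable Y) (hYi : Integrable Y μ) {c : ℝ} (hc : c ∈ Ioo (0:ℝ) 1) :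
    ∫ u in Ioo (0:ℝ) c, leftQuantile μ Y u
      = (∫ ω, min (Y ω) (leftQuantile μ Y c) ∂μ) - leftQuantile μ Y c * (1 - c) := by
  set a := leftQuantile μ Y c with ha
  have hfmeas : Measurable (fun y : ℝ => min y a) := measurable_id.min measurable_const
  have htrans : ∫ u in Ioo (0:ℝ) 1, min (leftQuantile μ Y u) a = ∫ ω, min (Y ω) a ∂μ :=
    integral_qcomp hY hfmeas
  have hIOn : IntegrableOn (fun u => min (leftQuantile μ Y u) a) (Ioo (0:ℝ) 1) volume :=
    integrable_qcomp (μ := μ) (Y := Y) (f := fun y => min y a) hY hfmeas (integrable_min_const hYi a)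
  have hsplit : Ioo (0:ℝ) 1 = Ioo (0:ℝ) c ∪ Ico c 1 := by
    ext u
    simp only [mem_Ioo, mem_union, mem_Ico]
    constructor
    · rintro ⟨h0, h1⟩
      rcases lt_or_ge u c with h | h
      · exact Or.inl ⟨h0, h⟩
      · exact Or.inr ⟨h, h1⟩
    · rintro (⟨h0, h1⟩ | ⟨h0, h1⟩)
      · exact ⟨h0, lt_trans h1 hc.2⟩
      · exact ⟨lt_of_lt_of_le hc.1 h0, h1⟩
  have hdisj : Disjoint (Ioo (0:ℝ) c) (Ico c 1) := by
    apply Set.disjoint_left.2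
    rintro u ⟨_, h1⟩ ⟨h2, _⟩
    linarith
  have hsum : ∫ u in Ioo (0:ℝ) 1, min (leftQuantile μ Y u) a
      = (∫ u in Ioo (0:ℝ) c, min (leftQuantile μ Y u) a)
        + ∫ u in Ico c 1, min (leftQuantile μ Y u) a := by
    rw [hsplit] at hIOn ⊢
    exact setIntegral_union hdisj measurableSet_Ico
      (hIOn.mono_set subset_union_left) (hIOn.mono_set subset_union_right)
  have hlow : ∫ u in Ioo (0:ℝ) c, min (leftQuantile μ Y u) a
      = ∫ u in Ioo (0:ℝ) c, leftQuantile μ Y u := by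
    apply setIntegral_congr_fun measurableSet_Ioo
    intro u hu
    exact min_eq_left (leftQuantile_mono hY hu.1 hu.2.le hc.2)
  have hhigh : ∫ u in Ico c 1, min (leftQuantile μ Y u) a = (1 - c) * a := by
    have : ∫ u in Ico c 1, min (leftQuantile μ Y u) a = ∫ _u in Ico c 1, a := by
      apply setIntegral_congr_fun measurableSet_Ico
      intro u hu
      exact min_eq_right (leftQuantile_mono hY hc.1 hu.1 hu.2)
    rw [this, setIntegral_const, Real.volume_real_Ico, max_eq_left (by linarith [hc.2]),
      smul_eq_mul]
  rw [htrans, hlow, hhigh] at hsum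
  linarith

lemma top_formula (hY : Measurable Y) (hYi : Integrable Y μ) {d : ℝ} (hd : d ∈ Ioo (0:ℝ) 1) :
    ∫ u in Ioo d 1, leftQuantile μ Y u
      = (∫ ω, max (Y ω) (leftQuantile μ Y d) ∂μ) - leftQuantile μ Y d * d := by
  set a := leftQuantile μ Y d with ha
  have hfmeas : Measurable (fun y : ℝ => max y a) := measurable_id.max measurable_const
  have htrans : ∫ u in Ioo (0:ℝ) 1, max (leftQuantile μ Y u) a = ∫ ω, max (Y ω) a ∂μ :=
    integral_qcomp hY hfmeas
  have hIOn : IntegrableOn (fun u => max (leftQuantile μ Y u) a) (Ioo (0:ℝ) 1) volume :=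
    integrable_qcomp (μ := μ) (Y := Y) (f := fun y => max y a) hY hfmeas (integrable_max_const hYi a)
  have hsplit : Ioo (0:ℝ) 1 = Ioc (0:ℝ) d ∪ Ioo d 1 := by
    ext u
    simp only [mem_Ioo, mem_union, mem_Ioc]
    constructor
    · rintro ⟨h0, h1⟩
      rcases le_or_gt u d with h | h
      · exact Or.inl ⟨h0, h⟩
      · exact Or.inr ⟨h, h1⟩
    · rintro (⟨h0, h1⟩ | ⟨h0, h1⟩)
      · exact ⟨h0, lt_of_le_of_lt h1 hd.2⟩
      · exact ⟨lt_trans hd.1 h0, h1⟩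
  have hdisj : Disjoint (Ioc (0:ℝ) d) (Ioo d 1) := by
    apply Set.disjoint_left.2
    rintro u ⟨_, h1⟩ ⟨h2, _⟩
    linarith
  have hsum : ∫ u in Ioo (0:ℝ) 1, max (leftQuantile μ Y u) a
      = (∫ u in Ioc (0:ℝ) d, max (leftQuantile μ Y u) a)
        + ∫ u in Ioo d 1, max (leftQuantile μ Y u) a := by
    rw [hsplit] at hIOn ⊢
    exact setIntegral_union hdisj measurableSet_Ioo
      (hIOn.mono_set subset_union_left) (hIOn.mono_set subset_union_right)
  have hlow : ∫ u in Ioc (0:ℝ) d, max (leftQuantile μ Y u) a = d * a := by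
    have : ∫ u in Ioc (0:ℝ) d, max (leftQuantile μ Y u) a = ∫ _u in Ioc (0:ℝ) d, a := by
      apply setIntegral_congr_fun measurableSet_Ioc
      intro u hu
      exact max_eq_right (leftQuantile_mono hY hu.1 hu.2 hd.2)
    rw [this, setIntegral_const, Real.volume_real_Ioc, max_eq_left (by linarith [hd.1]),
      smul_eq_mul, sub_zero]
  have hhigh : ∫ u in Ioo d 1, max (leftQuantile μ Y u) a
      = ∫ u in Ioo d 1, leftQuantile μ Y u := by
    apply setIntegral_congr_fun measurableSet_Ioo
    intro u hu
    exact max_eq_left (leftQuantile_mono hY hd.1 hu.1.le hu.2)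
  rw [htrans, hlow, hhigh] at hsum
  linarith

lemma integrable_of_bdd01 {h : Ω → ℝ} (hh : Measurable h) (h01 : ∀ ω, 0 ≤ h ω ∧ h ω ≤ 1) :
    Integrable h μ := by
  refine Integrable.mono' (integrable_const (1:ℝ)) hh.aestronglyMeasurable ?_
  exact Filter.Eventually.of_forall fun ω => by
    rw [Real.norm_eq_abs, abs_le]
    exact ⟨by linarith [(h01 ω).1], (h01 ω).2⟩

lemma integrable_mul01 (hYi : Integrable Y μ) {h : Ω → ℝ} (hh : Measurable h)
    (h01 : ∀ ω, 0 ≤ h ω ∧ h ω ≤ 1) : Integrable (fun ω => Y ω * h ω) μ := by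
  have := Integrable.bdd_mul (c := 1) hYi hh.aestronglyMeasurable
    (Filter.Eventually.of_forall fun ω => by
      rw [Real.norm_eq_abs, abs_le]
      exact ⟨by linarith [(h01 ω).1], (h01 ω).2⟩)
  exact this.congr (Filter.Eventually.of_forall fun ω => mul_comm _ _)

/-- expansion of the correction integrand -/
lemma expand_integral (hYi : Integrable Y μ) {h : Ω → ℝ} (hh : Measurable h)
    (h01 : ∀ ω, 0 ≤ h ω ∧ h ω ≤ 1) {c : ℝ} (hhc : ∫ ω, h ω ∂μ = c) (a : ℝ) :
    ∫ ω, (Y ω * h ω - min (Y ω) a + a * (1 - h ω)) ∂μ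
      = (∫ ω, Y ω * h ω ∂μ) - (∫ ω, min (Y ω) a ∂μ) + a * (1 - c) := by
  have i1 : Integrable (fun ω => Y ω * h ω) μ := integrable_mul01 hYi hh h01
  have i2 : Integrable (fun ω => min (Y ω) a) μ := integrable_min_const hYi a
  have i4 : Integrable (fun ω => (1:ℝ) - h ω) μ :=
    (integrable_const (1:ℝ)).sub (integrable_of_bdd01 hh h01)
  have i3 : Integrable (fun ω => a * (1 - h ω)) μ := i4.const_mul a
  have i12 : Integrable (fun ω => Y ω * h ω - min (Y ω) a) μ := i1.sub i2
  rw [integral_add i12 i3, integral_sub i1 i2]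
  congr 1
  rw [integral_const_mul, integral_sub (integrable_const (1:ℝ)) (integrable_of_bdd01 hh h01),
    hhc]
  simp

lemma HL_bottom (hY : Measurable Y) (hYi : Integrable Y μ) {c : ℝ} (hc : c ∈ Ioo (0:ℝ) 1)
    {h : Ω → ℝ} (hh : Measurable h) (h01 : ∀ ω, 0 ≤ h ω ∧ h ω ≤ 1)
    (hhc : ∫ ω, h ω ∂μ = c) :
    ∫ u in Ioo (0:ℝ) c, leftQuantile μ Y u ≤ ∫ ω, Y ω * h ω ∂μ := by
  set a := leftQuantile μ Y c with ha
  have hpt : ∀ ω, 0 ≤ Y ω * h ω - min (Y ω) a + a * (1 - h ω) := by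
    intro ω
    rcases le_total (Y ω) a with hca | hca
    · rw [min_eq_left hca]
      nlinarith [mul_nonneg (sub_nonneg.2 hca) (sub_nonneg.2 (h01 ω).2)]
    · rw [min_eq_right hca]
      nlinarith [mul_nonneg (sub_nonneg.2 hca) (h01 ω).1]
  have h0 : 0 ≤ ∫ ω, (Y ω * h ω - min (Y ω) a + a * (1 - h ω)) ∂μ :=
    integral_nonneg hpt
  rw [expand_integral hYi hh h01 hhc a] at h0
  rw [bottom_formula hY hYi hc, ← ha]
  linarith

lemma HL_top (hY : Measurable Y) (hYi : Integrable Y μ) {e : ℝ} (he : e ∈ Ioo (0:ℝ) 1)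
    {t : Ω → ℝ} (ht : Measurable t) (t01 : ∀ ω, 0 ≤ t ω ∧ t ω ≤ 1)
    (htc : ∫ ω, t ω ∂μ = e) :
    ∫ ω, Y ω * t ω ∂μ ≤ ∫ u in Ioo (1 - e) 1, leftQuantile μ Y u := by
  have hd : (1 - e) ∈ Ioo (0:ℝ) 1 := ⟨by linarith [he.2], by linarith [he.1]⟩
  set a := leftQuantile μ Y (1 - e) with ha
  have hpt : ∀ ω, 0 ≤ max (Y ω) a - a * (1 - t ω) - Y ω * t ω := by
    intro ω
    rcases le_total a (Y ω) with hca | hca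
    · rw [max_eq_left hca]
      nlinarith [mul_nonneg (sub_nonneg.2 hca) (sub_nonneg.2 (t01 ω).2)]
    · rw [max_eq_right hca]
      nlinarith [mul_nonneg (sub_nonneg.2 hca) (t01 ω).1]
  have i1 : Integrable (fun ω => Y ω * t ω) μ := integrable_mul01 hYi ht t01
  have i2 : Integrable (fun ω => max (Y ω) a) μ := integrable_max_const hYi a
  have i4 : Integrable (fun ω => (1:ℝ) - t ω) μ :=
    (integrable_const (1:ℝ)).sub (integrable_of_bdd01 ht t01)
  have i3 : Integrable (fun ω => a * (1 - t ω)) μ := i4.const_mul a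
  have h0 : 0 ≤ ∫ ω, (max (Y ω) a - a * (1 - t ω) - Y ω * t ω) ∂μ :=
    integral_nonneg hpt
  have i23 : Integrable (fun ω => max (Y ω) a - a * (1 - t ω)) μ := i2.sub i3
  rw [integral_sub i23 i1, integral_sub i2 i3] at h0
  have h5 : ∫ ω, a * (1 - t ω) ∂μ = a * (1 - e) := by
    rw [integral_const_mul, integral_sub (integrable_const (1:ℝ)) (integrable_of_bdd01 ht t01),
      htc]
    simp
  rw [h5] at h0
  rw [top_formula hY hYi hd, ← ha]
  linarith

lemma cdf_lt_of_lt_leftQuantile (hY : Measurable Y) {u x : ℝ} (hu : 0 < u)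
    (hx : x < leftQuantile μ Y u) : (μ {ω | Y ω ≤ x}).toReal < u := by
  have := notMem_of_lt_csInf (s := {x : ℝ | u ≤ (μ {ω | Y ω ≤ x}).toReal}) hx
    (qset_bddBelow hY hu)
  simpa [not_le] using this

lemma attain_bottom (hY : Measurable Y) (hYi : Integrable Y μ) {c : ℝ} (hc : c ∈ Ioo (0:ℝ) 1) :
    ∃ h : Ω → ℝ, Measurable h ∧ (∀ ω, 0 ≤ h ω ∧ h ω ≤ 1) ∧ (∫ ω, h ω ∂μ = c) ∧
      (∫ ω, Y ω * h ω ∂μ = ∫ u in Ioo (0:ℝ) c, leftQuantile μ Y u) := by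
  set a := leftQuantile μ Y c with ha
  set p := (μ {ω | Y ω < a}).toReal with hp
  set r := (μ {ω | Y ω = a}).toReal with hr
  have hmlt : MeasurableSet {ω | Y ω < a} := hY measurableSet_Iio
  have hmeq : MeasurableSet {ω | Y ω = a} := hY (measurableSet_singleton a)
  -- p + r = F a ≥ c
  have hunion : {ω | Y ω ≤ a} = {ω | Y ω < a} ∪ {ω | Y ω = a} := by
    ext ω; simp only [mem_setOf_eq, mem_union]; exact le_iff_lt_or_eq
  have hdisj : Disjoint {ω | Y ω < a} {ω | Y ω = a} := by
    apply Set.disjoint_left.2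
    rintro ω h1 h2
    simp only [mem_setOf_eq] at h1 h2
    exact absurd h2 (ne_of_lt h1)
  have hpr : p + r = (μ {ω | Y ω ≤ a}).toReal := by
    rw [hunion, measure_union hdisj hmeq, ENNReal.toReal_add (measure_ne_top μ _) (measure_ne_top μ _)]
  have hcle : c ≤ p + r := by
    rw [hpr]; exact le_cdf_leftQuantile hY hc.1 hc.2
  -- p ≤ c
  have hple : p ≤ c := by
    have hmono : Monotone (fun n : ℕ => {ω | Y ω ≤ a - 1/(n+1)}) := by
      intro m n hmn ω hω
      simp only [mem_setOf_eq] at hω ⊢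
      have h1 : (1:ℝ)/(n+1) ≤ 1/(m+1) := by
        apply one_div_le_one_div_of_le (by positivity)
        have : (m:ℝ) ≤ n := by exact_mod_cast hmn
        linarith
      linarith
    have hU : ⋃ n : ℕ, {ω | Y ω ≤ a - 1/(n+1)} = {ω | Y ω < a} := by
      ext ω
      simp only [mem_iUnion, mem_setOf_eq]
      constructor
      · rintro ⟨n, hn⟩
        have : (0:ℝ) < 1/(n+1) := by positivity
        linarith
      · intro hω
        obtain ⟨n, hn⟩ := exists_nat_one_div_lt (show (0:ℝ) < a - Y ω by linarith)
        exact ⟨n, by linarith⟩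
    have hT := tendsto_measure_iUnion_atTop (μ := μ) hmono
    rw [hU] at hT
    have hle : ∀ n : ℕ, μ {ω | Y ω ≤ a - 1/(n+1)} ≤ ENNReal.ofReal c := by
      intro n
      have hlt : a - 1/(n+1) < a := by
        have : (0:ℝ) < 1/(n+1) := by positivity
        linarith
      have := cdf_lt_of_lt_leftQuantile (μ := μ) hY hc.1 (by rw [← ha]; exact hlt)
      calc μ {ω | Y ω ≤ a - 1/(n+1)}
          = ENNReal.ofReal ((μ {ω | Y ω ≤ a - 1/(n+1)}).toReal) :=
            (ENNReal.ofReal_toReal (measure_ne_top μ _)).symm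
        _ ≤ ENNReal.ofReal c := ENNReal.ofReal_le_ofReal this.le
    have hlim : μ {ω | Y ω < a} ≤ ENNReal.ofReal c :=
      le_of_tendsto hT (Filter.Eventually.of_forall hle)
    rw [hp]
    calc (μ {ω | Y ω < a}).toReal ≤ (ENNReal.ofReal c).toReal :=
          ENNReal.toReal_mono (by simp) hlim
      _ = c := ENNReal.toReal_ofReal hc.1.le
  have hr0 : 0 ≤ r := ENNReal.toReal_nonneg
  set θ : ℝ := if r = 0 then 0 else (c - p)/r with hθ
  have hθ01 : 0 ≤ θ ∧ θ ≤ 1 := by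
    rw [hθ]
    split_ifs with h
    · norm_num
    · have hrpos : 0 < r := lt_of_le_of_ne hr0 (Ne.symm h)
      constructor
      · apply div_nonneg (by linarith) hrpos.le
      · rw [div_le_one hrpos]; linarith
  have hpθr : p + θ * r = c := by
    rw [hθ]
    split_ifs with h
    · rw [h] at hcle hpr ⊢
      simp only [mul_zero, add_zero] at hcle ⊢
      linarith
    · field_simp
      ring
  set h : Ω → ℝ := fun ω => if Y ω < a then 1 else if Y ω = a then θ else 0 with hdefh
  have hhm : Measurable h := by
    apply Measurable.ite hmlt measurable_const
    exact Measurable.ite hmeq measurable_const measurable_const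
  have h01 : ∀ ω, 0 ≤ h ω ∧ h ω ≤ 1 := by
    intro ω
    simp only [hdefh]
    by_cases h1 : Y ω < a
    · simp [h1]
    · by_cases h2 : Y ω = a
      · simp [h1, h2, hθ01.1, hθ01.2]
      · simp [h1, h2]
  have hint : ∫ ω, h ω ∂μ = c := by
    have hfun : h = fun ω => Set.indicator {ω | Y ω < a} (fun _ => (1:ℝ)) ω
            + Set.indicator {ω | Y ω = a} (fun _ => θ) ω := by
      funext ω
      simp only [hdefh]
      by_cases h1 : Y ω < a
      · have h2 : ¬ Y ω = a := ne_of_lt h1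
        simp [Set.indicator_apply, h1, h2]
      · by_cases h2 : Y ω = a
        · simp [Set.indicator_apply, h1, h2]
        · simp [Set.indicator_apply, h1, h2]
    rw [hfun, integral_add ((integrable_const (1:ℝ)).indicator hmlt)
      ((integrable_const θ).indicator hmeq),
      integral_indicator_const _ hmlt, integral_indicator_const _ hmeq]
    simp only [smul_eq_mul, mul_one]
    rw [measureReal_def, measureReal_def, ← hp, ← hr]
    linarith [hpθr]
  have hYh : ∫ ω, Y ω * h ω ∂μ = ∫ u in Ioo (0:ℝ) c, leftQuantile μ Y u := by
    have hzero : ∀ ω, Y ω * h ω - min (Y ω) a + a * (1 - h ω) = 0 := by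
      intro ω
      simp only [hdefh]
      by_cases h1 : Y ω < a
      · rw [min_eq_left h1.le, if_pos h1]; ring
      · by_cases h2 : Y ω = a
        · rw [if_neg h1, if_pos h2, h2, min_self]; ring
        · push_neg at h1
          rw [min_eq_right h1, if_neg h1.not_gt, if_neg h2]; ring
    have hIzero : ∫ ω, (Y ω * h ω - min (Y ω) a + a * (1 - h ω)) ∂μ = 0 := by
      have : (fun ω => Y ω * h ω - min (Y ω) a + a * (1 - h ω)) = fun _ => (0:ℝ) :=
        funext hzero
      rw [this, integral_zero]
    rw [expand_integral hYi hhm h01 hint a] at hIzero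
    rw [bottom_formula hY hYi hc, ← ha]
    linarith
  exact ⟨h, hhm, h01, hint, hYh⟩

lemma leftQuantile_congr {X X' : Ω → ℝ} (h : X =ᵐ[μ] X') :
    leftQuantile μ X = leftQuantile μ X' := by
  funext u
  unfold leftQuantile
  congr 1
  ext x
  have : {ω | X ω ≤ x} =ᵐ[μ] {ω | X' ω ≤ x} := by
    rw [Filter.eventuallyEq_set]
    filter_upwards [h] with ω hω
    simp [hω]
  rw [mem_setOf_eq, mem_setOf_eq, measure_congr this]

lemma one_sub_prod_le_sum {ι : Type*} (s : Finset ι) (f : ι → ℝ)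
    (h0 : ∀ i, 0 ≤ f i) (h1 : ∀ i, f i ≤ 1) :
    1 - ∏ i ∈ s, (1 - f i) ≤ ∑ i ∈ s, f i := by
  classical
  induction s using Finset.induction_on with
  | empty => simp
  | insert _ _ hnot ih =>
    rename_i a s
    rw [Finset.prod_insert hnot, Finset.sum_insert hnot]
    have hP0 : 0 ≤ ∏ i ∈ s, (1 - f i) :=
      Finset.prod_nonneg fun i _ => by linarith [h1 i]
    have hP1 : ∏ i ∈ s, (1 - f i) ≤ 1 :=
      Finset.prod_le_one (fun i _ => by linarith [h1 i]) (fun i _ => by linarith [h0 i])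
    nlinarith [h0 a, h1 a, ih]

lemma prod_one_sub_le {ι : Type*} [DecidableEq ι] (s : Finset ι) (f : ι → ℝ)
    (h0 : ∀ i, 0 ≤ f i) (h1 : ∀ i, f i ≤ 1) {j : ι} (hj : j ∈ s) :
    ∏ i ∈ s, (1 - f i) ≤ 1 - f j := by
  rw [← Finset.mul_prod_erase s _ hj]
  have hP1 : ∏ i ∈ s.erase j, (1 - f i) ≤ 1 :=
    Finset.prod_le_one (fun i _ => by linarith [h1 i]) (fun i _ => by linarith [h0 i])
  have hP0 : 0 ≤ ∏ i ∈ s.erase j, (1 - f i) :=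
    Finset.prod_nonneg fun i _ => by linarith [h1 i]
  nlinarith [h0 j, h1 j]


end Aux

theorem stmt7 {Ω : Type*} [MeasurableSpace Ω] (μ : Measure Ω) [IsProbabilityMeasure μ]
    (n : ℕ) (X : Fin n → Ω → ℝ) (hX : ∀ i, Integrable (X i) μ)
    (β : Fin n → ℝ) (hβ : ∀ i, β i ∈ Set.Ioo (0 : ℝ) 1)
    (B : ℝ) (hBdef : B = ∑ i, β i) (hB : B ∈ Set.Ioo (0 : ℝ) 1) :
    avgQuantile μ (fun ω => ∑ i, X i ω) (Set.Icc 0 B)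
      ≤ ∑ i, avgQuantile μ (X i) (Set.Icc 0 (β i) ∪ Set.Icc (1 - B + β i) 1) := by
  classical
  -- measurable representatives
  set X' : Fin n → Ω → ℝ := fun i => ((hX i).1.mk (X i)) with hX'def
  have hXm : ∀ i, Measurable (X' i) := fun i => (hX i).1.stronglyMeasurable_mk.measurable
  have hXae : ∀ i, X i =ᵐ[μ] X' i := fun i => (hX i).1.ae_eq_mk
  have hXi : ∀ i, Integrable (X' i) μ := fun i => ((hX i).congr (hXae i))
  set S : Ω → ℝ := fun ω => ∑ i, X' i ω with hSdef
  have hSm : Measurable S := Finset.measurable_sum _ (fun i _ => hXm i)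
  have hSi : Integrable S μ := integrable_finset_sum _ (fun i _ => hXi i)
  have hSae : (fun ω => ∑ i, X i ω) =ᵐ[μ] S := by
    have hall : ∀ᵐ ω ∂μ, ∀ i, X i ω = X' i ω := ae_all_iff.2 fun i => hXae i
    filter_upwards [hall] with ω hω
    exact Finset.sum_congr rfl fun i _ => hω i
  -- replace quantiles by those of measurable representatives
  have hQS : leftQuantile μ (fun ω => ∑ i, X i ω) = leftQuantile μ S :=
    leftQuantile_congr hSae
  have hQi : ∀ i, leftQuantile μ (X i) = leftQuantile μ (X' i) :=
    fun i => leftQuantile_congr (hXae i)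
  have hβB : ∀ i, β i ≤ B := by
    intro i
    rw [hBdef]
    exact Finset.single_le_sum (fun j _ => (hβ j).1.le) (Finset.mem_univ i)
  -- the optimal bottom densities
  choose h hmeas h01 hint hYh using fun i => attain_bottom (hXm i) (hXi i) (hβ i)
  -- global density
  set H : Ω → ℝ := fun ω => 1 - ∏ i, (1 - h i ω) with hHdef
  have hHm : Measurable H :=
    measurable_const.sub (Finset.measurable_prod _ (fun i _ => measurable_const.sub (hmeas i)))
  have hH01 : ∀ ω, 0 ≤ H ω ∧ H ω ≤ 1 := by
    intro ω
    constructor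
    · have := Finset.prod_le_one (s := Finset.univ) (f := fun i => 1 - h i ω)
        (fun i _ => by show (0:ℝ) ≤ 1 - h i ω; linarith [(h01 i ω).2])
        (fun i _ => by show (1:ℝ) - h i ω ≤ 1; linarith [(h01 i ω).1])
      simp only [hHdef]; linarith
    · have := Finset.prod_nonneg (s := Finset.univ) (f := fun i => 1 - h i ω)
        (fun i _ => by show (0:ℝ) ≤ 1 - h i ω; linarith [(h01 i ω).2])
      simp only [hHdef]; linarith
  have hHi : Integrable H μ := integrable_of_bdd01 hHm hH01
  have hHle : ∀ ω, H ω ≤ ∑ i, h i ω := by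
    intro ω
    exact one_sub_prod_le_sum Finset.univ (fun i => h i ω)
      (fun i => (h01 i ω).1) (fun i => (h01 i ω).2)
  have hHge : ∀ i ω, h i ω ≤ H ω := by
    intro i ω
    have := prod_one_sub_le Finset.univ (fun j => h j ω)
      (fun j => (h01 j ω).1) (fun j => (h01 j ω).2) (Finset.mem_univ i)
    simp only [hHdef]; linarith
  set EH : ℝ := ∫ ω, H ω ∂μ with hEHdef
  have hEH0 : 0 ≤ EH := integral_nonneg fun ω => (hH01 ω).1
  have hEHB : EH ≤ B := by
    have h1 : EH ≤ ∫ ω, ∑ i, h i ω ∂μ :=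
      integral_mono hHi (integrable_finset_sum _ (fun i _ => integrable_of_bdd01 (hmeas i) (h01 i))) hHle
    have h2 : ∫ ω, ∑ i, h i ω ∂μ = ∑ i, β i := by
      rw [integral_finset_sum _ (fun i _ => integrable_of_bdd01 (hmeas i) (h01 i))]
      exact Finset.sum_congr rfl fun i _ => hint i
    rw [h2] at h1
    rw [hBdef]
    exact h1
  have hEH1 : EH < 1 := lt_of_le_of_lt hEHB hB.2
  set lam : ℝ := (B - EH)/(1 - EH) with hlam
  have hlam0 : 0 ≤ lam := div_nonneg (by linarith) (by linarith)
  have hlam1 : lam ≤ 1 := by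
    rw [hlam, div_le_one (by linarith)]
    linarith [hB.2]
  set g : Ω → ℝ := fun ω => H ω + lam * (1 - H ω) with hgdef
  have hgm : Measurable g := hHm.add ((measurable_const.sub hHm).const_mul lam)
  have hg01 : ∀ ω, 0 ≤ g ω ∧ g ω ≤ 1 := by
    intro ω
    obtain ⟨hA1, hA2⟩ := hH01 ω
    constructor
    · simp only [hgdef]
      have : 0 ≤ lam * (1 - H ω) := mul_nonneg hlam0 (by linarith)
      linarith
    · simp only [hgdef]
      nlinarith
  have hgB : ∫ ω, g ω ∂μ = B := by
    have : ∫ ω, g ω ∂μ = EH + lam * (1 - EH) := by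
      simp only [hgdef]
      have hI2 : Integrable (fun ω => lam * (1 - H ω)) μ :=
        ((integrable_const (1:ℝ)).sub hHi).const_mul lam
      rw [integral_add hHi hI2, integral_const_mul,
        integral_sub (integrable_const (1:ℝ)) hHi]
      simp [hEHdef]
    rw [this, hlam, div_mul_cancel₀]
    · ring
    · intro hcon; rw [sub_eq_zero] at hcon; exact absurd hcon.symm (ne_of_lt hEH1)
  have hggeh : ∀ i ω, h i ω ≤ g ω := by
    intro i ω
    have h1 : 0 ≤ lam * (1 - H ω) := mul_nonneg hlam0 (by linarith [(hH01 ω).2])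
    have := hHge i ω
    simp only [hgdef]
    linarith
  -- allocate to the upper parts
  set t : Fin n → Ω → ℝ := fun i ω => g ω - h i ω with htdef
  have htm : ∀ i, Measurable (t i) := fun i => hgm.sub (hmeas i)
  have ht01 : ∀ i ω, 0 ≤ t i ω ∧ t i ω ≤ 1 := by
    intro i ω
    constructor
    · simp only [htdef]; linarith [hggeh i ω]
    · simp only [htdef]; linarith [(hg01 ω).2, (h01 i ω).1]
  have htint : ∀ i, ∫ ω, t i ω ∂μ = B - β i := by
    intro i
    simp only [htdef]
    rw [integral_sub (integrable_of_bdd01 hgm hg01) (integrable_of_bdd01 (hmeas i) (h01 i)),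
      hgB, hint i]
  -- the main chain
  have hchain : ∫ u in Ioo (0:ℝ) B, leftQuantile μ S u
      ≤ ∑ i, ((∫ u in Ioo (0:ℝ) (β i), leftQuantile μ (X' i) u)
          + ∫ u in Ioo (1 - B + β i) 1, leftQuantile μ (X' i) u) := by
    have step1 : ∫ u in Ioo (0:ℝ) B, leftQuantile μ S u ≤ ∫ ω, S ω * g ω ∂μ :=
      HL_bottom hSm hSi hB hgm hg01 hgB
    have step2 : ∫ ω, S ω * g ω ∂μ = ∑ i, ∫ ω, X' i ω * g ω ∂μ := by
      have : (fun ω => S ω * g ω) = fun ω => ∑ i, X' i ω * g ω := by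
        funext ω
        simp only [hSdef]
        rw [Finset.sum_mul]
      rw [this, integral_finset_sum _ (fun i _ => integrable_mul01 (hXi i) hgm hg01)]
    have step3 : ∀ i, ∫ ω, X' i ω * g ω ∂μ
        = (∫ ω, X' i ω * h i ω ∂μ) + ∫ ω, X' i ω * t i ω ∂μ := by
      intro i
      have : (fun ω => X' i ω * g ω) = fun ω => X' i ω * h i ω + X' i ω * t i ω := by
        funext ω
        simp only [htdef]
        ring
      rw [this, integral_add (integrable_mul01 (hXi i) (hmeas i) (h01 i))
        (integrable_mul01 (hXi i) (htm i) (ht01 i))]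
    have step4 : ∀ i, ∫ ω, X' i ω * t i ω ∂μ
        ≤ ∫ u in Ioo (1 - B + β i) 1, leftQuantile μ (X' i) u := by
      intro i
      by_cases hni : 0 < B - β i
      · have he : B - β i ∈ Ioo (0:ℝ) 1 := ⟨hni, by linarith [hB.2, (hβ i).1]⟩
        have := HL_top (hXm i) (hXi i) he (htm i) (ht01 i) (htint i)
        have heq : 1 - (B - β i) = 1 - B + β i := by ring
        rwa [heq] at this
      · have he0 : B - β i = 0 := le_antisymm (not_lt.1 hni) (by linarith [hβB i])
        have htz : t i =ᵐ[μ] 0 := by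
          rw [← integral_eq_zero_iff_of_nonneg_ae
            (Filter.Eventually.of_forall fun ω => (ht01 i ω).1)
            (integrable_of_bdd01 (htm i) (ht01 i))]
          rw [htint i, he0]
        have hXz : (fun ω => X' i ω * t i ω) =ᵐ[μ] fun _ => (0:ℝ) := by
          filter_upwards [htz] with ω hω
          simp only [Pi.zero_apply] at hω
          rw [hω, mul_zero]
        rw [integral_congr_ae hXz, integral_zero]
        have : Ioo (1 - B + β i) 1 = (∅ : Set ℝ) := by
          have : 1 - B + β i = 1 := by linarith
          rw [this, Ioo_self]
        rw [this]
        simp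
    calc ∫ u in Ioo (0:ℝ) B, leftQuantile μ S u ≤ ∫ ω, S ω * g ω ∂μ := step1
      _ = ∑ i, ∫ ω, X' i ω * g ω ∂μ := step2
      _ = ∑ i, ((∫ ω, X' i ω * h i ω ∂μ) + ∫ ω, X' i ω * t i ω ∂μ) :=
          Finset.sum_congr rfl fun i _ => step3 i
      _ ≤ ∑ i, ((∫ u in Ioo (0:ℝ) (β i), leftQuantile μ (X' i) u)
          + ∫ u in Ioo (1 - B + β i) 1, leftQuantile μ (X' i) u) := by
          apply Finset.sum_le_sum
          intro i _
          rw [hYh i]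
          exact add_le_add_right (step4 i) _
  -- convert to avgQuantile form
  have hB0 : (0:ℝ) ≤ B := hB.1.le
  have hIccB : (volume (Icc (0:ℝ) B)).toReal = B := by
    rw [Real.volume_Icc, ENNReal.toReal_ofReal (by linarith)]
    ring
  have hLHS : avgQuantile μ (fun ω => ∑ i, X i ω) (Icc 0 B)
      = B⁻¹ * ∫ u in Ioo (0:ℝ) B, leftQuantile μ S u := by
    rw [avgQuantile, hQS, hIccB, integral_Icc_eq_integral_Ioo]
  have hRHS : ∀ i, avgQuantile μ (X i) (Icc 0 (β i) ∪ Icc (1 - B + β i) 1)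
      = B⁻¹ * ((∫ u in Ioo (0:ℝ) (β i), leftQuantile μ (X' i) u)
          + ∫ u in Ioo (1 - B + β i) 1, leftQuantile μ (X' i) u) := by
    intro i
    have hdisj : Disjoint (Icc (0:ℝ) (β i)) (Icc (1 - B + β i) 1) := by
      apply Set.disjoint_left.2
      rintro x ⟨_, hx2⟩ ⟨hx3, _⟩
      have : β i < 1 - B + β i := by linarith [hB.2]
      linarith
    have hvol : (volume (Icc (0:ℝ) (β i) ∪ Icc (1 - B + β i) 1)).toReal = B := by
      rw [measure_union hdisj measurableSet_Icc, Real.volume_Icc, Real.volume_Icc,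
        ENNReal.toReal_add ENNReal.ofReal_ne_top ENNReal.ofReal_ne_top,
        ENNReal.toReal_ofReal (by linarith [(hβ i).1]),
        ENNReal.toReal_ofReal (by linarith [hβB i])]
      ring
    have hsub1 : Ioo (0:ℝ) (β i) ⊆ Ioo (0:ℝ) 1 := Ioo_subset_Ioo_right (hβ i).2.le
    have hsub2 : Ioo (1 - B + β i) 1 ⊆ Ioo (0:ℝ) 1 :=
      Ioo_subset_Ioo_left (by linarith [hB.2, (hβ i).1])
    have hint1 : IntegrableOn (leftQuantile μ (X' i)) (Icc (0:ℝ) (β i)) volume :=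
      ((integrableOn_quantile (hXm i) (hXi i)).mono_set hsub1).congr_set_ae
        Ioo_ae_eq_Icc.symm
    have hint2 : IntegrableOn (leftQuantile μ (X' i)) (Icc (1 - B + β i) 1) volume :=
      ((integrableOn_quantile (hXm i) (hXi i)).mono_set hsub2).congr_set_ae
        Ioo_ae_eq_Icc.symm
    have e1 : ∫ u in Icc (0:ℝ) (β i), leftQuantile μ (X' i) u
        = ∫ u in Ioo (0:ℝ) (β i), leftQuantile μ (X' i) u :=
      setIntegral_congr_set Ioo_ae_eq_Icc.symm
    have e2 : ∫ u in Icc (1 - B + β i) 1, leftQuantile μ (X' i) u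
        = ∫ u in Ioo (1 - B + β i) 1, leftQuantile μ (X' i) u :=
      setIntegral_congr_set Ioo_ae_eq_Icc.symm
    rw [avgQuantile, hQi i, hvol, setIntegral_union hdisj measurableSet_Icc hint1 hint2,
      e1, e2]
  rw [hLHS]
  have hsum : ∑ i, avgQuantile μ (X i) (Icc 0 (β i) ∪ Icc (1 - B + β i) 1)
      = B⁻¹ * ∑ i, ((∫ u in Ioo (0:ℝ) (β i), leftQuantile μ (X' i) u)
          + ∫ u in Ioo (1 - B + β i) 1, leftQuantile μ (X' i) u) := by
    rw [Finset.mul_sum]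
    exact Finset.sum_congr rfl fun i _ => hRHS i
  rw [hsum]
  exact mul_le_mul_of_nonneg_left hchain (inv_nonneg.2 hB0)
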